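/- For real z with |z| < 256/27, ∑_{n≥1} z^n / (n² · binom(4n, n)) = (3/4) · ∫_0^1 (−log(1 − z x³ + z x⁴)) / (x(1−x)) dx. -/

import Mathlib

open MeasureTheory intervalIntegral Real

lemma beta_nat (a b : ℕ) : ∫ x in (0:ℝ)..1, x ^ a * (1 - x) ^ b
    = (a.factorial * b.factorial : ℝ) / (a + b + 1).factorial := by
  induction b generalizing a with
  | zero =>
    simp only [pow_zero, mul_one, integral_pow, one_pow, Nat.factorial_zero, Nat.cast_one,
      Nat.add_zero, Nat.factorial_succ, Nat.cast_mul]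
    rw [zero_pow (by omega), sub_zero]
    have h1 : (0:ℝ) < (a:ℝ) + 1 := by positivity
    have h2 : (0:ℝ) < (a.factorial : ℝ) := by exact_mod_cast a.factorial_pos
    push_cast
    field_simp
  | succ b ih =>
    have hu : ∀ x ∈ Set.uIcc (0:ℝ) 1, HasDerivAt (fun x : ℝ => (1 - x) ^ (b + 1))
        (-(((b:ℝ)+1) * (1 - x) ^ b)) x := by
      intro x _
      have := ((hasDerivAt_id x).const_sub 1).pow (b+1)
      simp only [id] at this
      refine this.congr_deriv ?_
      rw [Nat.add_sub_cancel]; push_cast; ring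
    have hv : ∀ x ∈ Set.uIcc (0:ℝ) 1, HasDerivAt (fun x : ℝ => x ^ (a+1) / ((a:ℝ)+1))
        (x ^ a) x := by
      intro x _
      have := ((hasDerivAt_pow (a+1) x)).div_const ((a:ℝ)+1)
      refine this.congr_deriv ?_
      have : ((a:ℝ)+1) ≠ 0 := by positivity
      rw [Nat.add_sub_cancel]; push_cast
      field_simp
    have key := intervalIntegral.integral_mul_deriv_eq_deriv_mul hu hv
      (by apply Continuous.intervalIntegrable; continuity)
      (by apply Continuous.intervalIntegrable; continuity)
    have e1 : ∫ x in (0:ℝ)..1, x ^ a * (1 - x) ^ (b+1)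
        = ((b:ℝ)+1)/((a:ℝ)+1) * ∫ x in (0:ℝ)..1, x ^ (a+1) * (1 - x) ^ b := by
      rw [← intervalIntegral.integral_const_mul]
      rw [show (∫ x in (0:ℝ)..1, x ^ a * (1 - x) ^ (b+1))
          = ∫ x in (0:ℝ)..1, (1 - x) ^ (b+1) * x ^ a by
        congr 1; ext x; ring]
      rw [key, sub_self, zero_pow (by omega), zero_mul, zero_pow (by omega), zero_div,
        mul_zero, sub_zero, zero_sub, ← intervalIntegral.integral_neg]
      congr 1; ext x
      have : ((a:ℝ)+1) ≠ 0 := by positivity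
      field_simp
    rw [e1, ih]
    have h1 : ((a+1) + b + 1 : ℕ) = a + (b+1) + 1 := by ring
    rw [h1]
    rw [Nat.factorial_succ (a + (b+1))]
    rw [Nat.factorial_succ a, Nat.factorial_succ b]
    push_cast
    have h2 : ((a:ℝ)+1) ≠ 0 := by positivity
    have h3 : ((a:ℝ) + ((b:ℝ)+1) + 1) ≠ 0 := by positivity
    have h4 : ((a + (b+1) + 1).factorial : ℝ) ≠ 0 := by positivity
    field_simp


lemma g_bound {x : ℝ} (h1 : 0 ≤ x) (h2 : x ≤ 1) : x ^ 3 * (1 - x) ≤ 27 / 256 := by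
  nlinarith [mul_nonneg (sq_nonneg (4*x-3)) (by nlinarith : (0:ℝ) ≤ 16*x^2+8*x+3)]

theorem stmt_15 (z : ℝ) (hz : |z| < 256 / 27) :
    ∑' n : ℕ, z ^ (n + 1) / ((n + 1) ^ 2 * (Nat.choose (4 * (n + 1)) (n + 1))) =
      (3 / 4) *
        ∫ x in (0:ℝ)..1, (-Real.log (1 - z * x ^ 3 + z * x ^ 4)) / (x * (1 - x)) := by
  set f : ℕ → ℝ → ℝ := fun n x => z ^ (n+1) * (x ^ (3*n+2) * (1 - x) ^ n) / (n+1) with hf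
  set r : ℝ := |z| * (27/256) with hrdef
  have hr0 : 0 ≤ r := by positivity
  have hr1 : r < 1 := by rw [hrdef]; nlinarith [abs_nonneg z]
  -- continuity
  have hcont : ∀ n, Continuous (f n) := by
    intro n; simp only [hf]; fun_prop
  -- norm bound
  have hbound : ∀ n, ∀ x ∈ Set.Ioo (0:ℝ) 1, ‖f n x‖ ≤ |z| * r ^ n := by
    intro n x hx
    obtain ⟨hx0, hx1⟩ := hx
    have hgx : 0 ≤ x ^ 3 * (1 - x) := mul_nonneg (by positivity) (by linarith)
    have hgb : x ^ 3 * (1 - x) ≤ 27/256 := g_bound hx0.le hx1.le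
    have hxe : x ^ (3*n+2) * (1-x) ^ n = (x^3*(1-x))^n * x^2 := by
      rw [mul_pow, ← pow_mul]; ring
    have h1 : ‖f n x‖ = |z|^(n+1) * (x ^ (3*n+2) * (1-x)^n) / (n+1) := by
      rw [hf]
      simp only [norm_eq_abs, abs_div, abs_mul, abs_pow, abs_of_nonneg hx0.le,
        abs_of_nonneg (by linarith : (0:ℝ) ≤ 1 - x),
        abs_of_nonneg (by positivity : (0:ℝ) ≤ ((n:ℝ)+1))]
    rw [h1, hxe]
    have h2 : (x^3*(1-x))^n * x^2 ≤ (27/256)^n * 1 := by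
      apply mul_le_mul (pow_le_pow_left₀ hgx hgb n) (by nlinarith) (by positivity) (by positivity)
    have h3 : |z|^(n+1) * ((x^3*(1-x))^n * x^2) ≤ |z|^(n+1) * ((27/256)^n) := by
      apply mul_le_mul_of_nonneg_left (by linarith) (by positivity)
    have h4 : |z|^(n+1) * ((x^3*(1-x))^n*x^2) / (n+1) ≤ |z|^(n+1) * ((x^3*(1-x))^n*x^2) := by
      apply div_le_self (by positivity) (by push_cast; linarith [Nat.cast_nonneg (α := ℝ) n])
    calc |z|^(n+1) * ((x^3*(1-x))^n*x^2) / (n+1) ≤ |z|^(n+1) * ((27/256)^n) := by linarith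
    _ = |z| * r ^ n := by rw [hrdef, mul_pow, pow_succ]; ring
  -- integrability on Ioo
  have hint : ∀ n, IntegrableOn (f n) (Set.Ioo (0:ℝ) 1) := by
    intro n
    exact ((hcont n).integrableOn_Icc).mono_set Set.Ioo_subset_Icc_self
  -- pointwise HasSum
  have hsum : ∀ x ∈ Set.Ioo (0:ℝ) 1,
      HasSum (fun n => f n x) ((-Real.log (1 - z * x ^ 3 + z * x ^ 4)) / (x * (1 - x))) := by
    intro x hx
    obtain ⟨hx0, hx1⟩ := hx
    set w : ℝ := z * (x ^ 3 * (1 - x)) with hw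
    have hgx : 0 ≤ x ^ 3 * (1 - x) := mul_nonneg (by positivity) (by linarith)
    have hwabs : |w| < 1 := by
      rw [hw, abs_mul, abs_of_nonneg hgx]
      calc |z| * (x^3*(1-x)) ≤ |z| * (27/256) :=
            mul_le_mul_of_nonneg_left (g_bound hx0.le hx1.le) (abs_nonneg z)
      _ < 1 := hr1
    have H := (Real.hasSum_pow_div_log_of_abs_lt_one hwabs).div_const (x * (1 - x))
    have e1 : 1 - w = 1 - z * x ^ 3 + z * x ^ 4 := by rw [hw]; ring
    rw [e1] at H
    have hx0' : x ≠ 0 := ne_of_gt hx0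
    have hx1' : (1:ℝ) - x ≠ 0 := by linarith
    have efn : ∀ n : ℕ, w ^ (n+1)/((n:ℝ)+1)/(x*(1-x)) = f n x := by
      intro n
      have hp : w ^ (n+1) = z^(n+1) * (x^(3*n+3) * (1-x)^(n+1)) := by
        rw [hw, mul_pow, mul_pow, ← pow_mul]; ring_nf
      rw [hp, hf]
      have h32 : x ^ (3*n+3) = x ^ (3*n+2) * x := by rw [← pow_succ]
      rw [h32, pow_succ]
      field_simp
      ring
    simpa only [efn] using H
  -- termwise integral value
  have hterm : ∀ n : ℕ, (3/4 : ℝ) * ∫ x in (0:ℝ)..1, f n x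
      = z ^ (n + 1) / ((n + 1) ^ 2 * (Nat.choose (4 * (n + 1)) (n + 1))) := by
    intro n
    have e0 : (∫ x in (0:ℝ)..1, f n x)
        = z^(n+1)/((n:ℝ)+1) * ∫ x in (0:ℝ)..1, x ^ (3*n+2) * (1-x)^n := by
      rw [← intervalIntegral.integral_const_mul]
      congr 1; ext x; rw [hf]; ring
    rw [e0, beta_nat]
    have hidx : (3*n+2) + n + 1 = 4*n+3 := by ring
    rw [hidx]
    have keyN : Nat.choose (4*(n+1)) (n+1) * (n+1).factorial * (3*(n+1)).factorial
        = (4*(n+1)).factorial := by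
      have h := Nat.choose_mul_factorial_mul_factorial (show n+1 ≤ 4*(n+1) by omega)
      have h2 : 4*(n+1) - (n+1) = 3*(n+1) := by omega
      rwa [h2] at h
    have key : ((Nat.choose (4*(n+1)) (n+1)) : ℝ) * (n+1).factorial * (3*(n+1)).factorial
        = ((4*(n+1)).factorial : ℝ) := by exact_mod_cast congrArg Nat.cast keyN
    have f1 : ((n+1).factorial : ℝ) = ((n:ℝ)+1) * n.factorial := by
      rw [Nat.factorial_succ]; push_cast; ring
    have f2 : ((3*(n+1)).factorial : ℝ) = (3*(n:ℝ)+3) * ((3*n+2).factorial) := by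
      have : 3*(n+1) = (3*n+2)+1 := by omega
      rw [this, Nat.factorial_succ]; push_cast; ring
    have f3 : ((4*(n+1)).factorial : ℝ) = (4*(n:ℝ)+4) * ((4*n+3).factorial) := by
      have : 4*(n+1) = (4*n+3)+1 := by omega
      rw [this, Nat.factorial_succ]; push_cast; ring
    rw [f1, f2, f3] at key
    have hC : (0:ℝ) < (Nat.choose (4*(n+1)) (n+1) : ℝ) := by
      exact_mod_cast Nat.choose_pos (show n+1 ≤ 4*(n+1) by omega)
    have hF0 : (0:ℝ) < (n.factorial : ℝ) := by exact_mod_cast n.factorial_pos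
    have hF2 : (0:ℝ) < ((3*n+2).factorial : ℝ) := by exact_mod_cast (3*n+2).factorial_pos
    have hF3 : (0:ℝ) < ((4*n+3).factorial : ℝ) := by exact_mod_cast (4*n+3).factorial_pos
    have hN : (0:ℝ) < (n:ℝ)+1 := by positivity
    field_simp
    apply mul_left_cancel₀ hN.ne'; linear_combination z^(n+1) * key
  -- main chain
  have hS : Summable fun n => ∫ x in Set.Ioo (0:ℝ) 1, ‖f n x‖ := by
    apply Summable.of_nonneg_of_le (fun n => integral_nonneg (fun x => norm_nonneg _))
      (fun n => ?_) (((summable_geometric_of_lt_one hr0 hr1).mul_left |z|))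
    calc (∫ x in Set.Ioo (0:ℝ) 1, ‖f n x‖)
        ≤ ∫ _x in Set.Ioo (0:ℝ) 1, |z| * r ^ n := by
          apply setIntegral_mono_on (hint n).norm (integrableOn_const (by simp))
            measurableSet_Ioo (hbound n)
    _ = |z| * r ^ n := by simp
  have e2 : ∀ n, (∫ x in (0:ℝ)..1, f n x) = ∫ x in Set.Ioo (0:ℝ) 1, f n x := by
    intro n
    rw [intervalIntegral.integral_of_le zero_le_one, MeasureTheory.integral_Ioc_eq_integral_Ioo]
  have swap : (∫ x in (0:ℝ)..1, (-Real.log (1 - z * x ^ 3 + z * x ^ 4)) / (x * (1 - x)))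
      = ∑' n, ∫ x in (0:ℝ)..1, f n x := by
    rw [intervalIntegral.integral_of_le zero_le_one, MeasureTheory.integral_Ioc_eq_integral_Ioo]
    have e3 : (∫ x in Set.Ioo (0:ℝ) 1, -Real.log (1 - z * x ^ 3 + z * x ^ 4) / (x * (1 - x)))
        = ∫ x in Set.Ioo (0:ℝ) 1, ∑' n, f n x :=
      MeasureTheory.setIntegral_congr_fun measurableSet_Ioo
        (fun x hx => ((hsum x hx).tsum_eq).symm)
    exact e3.trans ((MeasureTheory.integral_tsum_of_summable_integral_norm hint hS).symm.trans
      (tsum_congr fun n => (e2 n).symm))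
  rw [swap, ← tsum_mul_left]
  exact (tsum_congr hterm).symm
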